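/- Let β < 0, B, x₀ ∈ ℝ, s > 0, Σ₂ > 0. The function γ₃(t) = 2(−B + e^{βt}x₀β + e^{βt}B)/(−Σ₂ + 2e^{2βt}βs² + e^{2βt}Σ₂) satisfies the linear ODE γ₃'(t) = 2Σ₂γ₃(t)γ₆(t) − 2Bγ₆(t) − βγ₃(t) with γ₃(0) = x₀/s², where γ₆(t) = −β/((2βs² + Σ₂)e^{2βt} − Σ₂). -/

import Mathlib

/-- The function `γ₃(t)` solves the linear ODE
`γ₃' = 2S₂γ₃γ₆ − 2Bγ₆ − βγ₃` with `γ₃(0) = x₀/s²`, where `γ₆` solves the Riccati equation. -/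
theorem stmt_4 (β B x₀ s S₂ : ℝ) (hβ : β < 0) (hs : 0 < s) (hS : 0 < S₂) :
    let γ₆ : ℝ → ℝ := fun t => -β / ((2*β*s^2 + S₂) * Real.exp (2*β*t) - S₂)
    let γ₃ : ℝ → ℝ := fun t =>
      2 * (-B + Real.exp (β*t) * x₀ * β + Real.exp (β*t) * B) /
        (-S₂ + 2 * Real.exp (2*β*t) * β * s^2 + Real.exp (2*β*t) * S₂)
    (∀ t : ℝ, 0 ≤ t →
      HasDerivAt γ₃ (2*S₂*(γ₃ t)*(γ₆ t) - 2*B*(γ₆ t) - β*(γ₃ t)) t) ∧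
    γ₃ 0 = x₀ / s^2 := by
  intro γ₆ γ₃
  have hD : ∀ t : ℝ, 0 ≤ t →
      (-S₂ + 2 * Real.exp (2*β*t) * β * s^2 + Real.exp (2*β*t) * S₂) < 0 := by
    intro t ht
    have hE : Real.exp (2*β*t) ≤ 1 := Real.exp_le_one_iff.mpr (by nlinarith)
    have hEp : 0 < Real.exp (2*β*t) := Real.exp_pos _
    nlinarith [mul_pos hs hs, mul_pos (mul_pos hs hs) hEp]
  constructor
  · intro t ht
    have hD' := hD t ht
    have hDne : (-S₂ + 2 * Real.exp (2*β*t) * β * s^2 + Real.exp (2*β*t) * S₂) ≠ 0 :=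
      ne_of_lt hD'
    -- derivative of numerator
    have hl1 : HasDerivAt (fun t : ℝ => β*t) β t := by
      simpa using (hasDerivAt_id t).const_mul β
    have hl2 : HasDerivAt (fun t : ℝ => 2*β*t) (2*β) t := by
      simpa using (hasDerivAt_id t).const_mul (2*β)
    have he1 : HasDerivAt (fun t => Real.exp (β*t)) (Real.exp (β*t) * β) t := hl1.exp
    have he2 : HasDerivAt (fun t => Real.exp (2*β*t)) (Real.exp (2*β*t) * (2*β)) t := hl2.exp
    have hN : HasDerivAt (fun t => 2 * (-B + Real.exp (β*t) * x₀ * β + Real.exp (β*t) * B))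
        (2 * (Real.exp (β*t) * β * x₀ * β + Real.exp (β*t) * β * B)) t := by
      have := (((he1.mul_const x₀).mul_const β).const_add (-B)).add (he1.mul_const B)
      simpa [mul_comm, mul_assoc, mul_left_comm, add_assoc] using this.const_mul 2
    have hDd : HasDerivAt (fun t => -S₂ + 2 * Real.exp (2*β*t) * β * s^2 + Real.exp (2*β*t) * S₂)
        (2 * (Real.exp (2*β*t) * (2*β)) * β * s^2 + Real.exp (2*β*t) * (2*β) * S₂) t := by
      have := ((((he2.const_mul 2).mul_const β).mul_const (s^2)).const_add (-S₂)).add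
        (he2.mul_const S₂)
      simpa [Pi.add_def, mul_comm, mul_assoc, mul_left_comm, add_assoc] using this
    have hder := hN.div hDd hDne
    refine hder.congr_deriv (Eq.symm ?_)
    have hDne2 : ((2*β*s^2 + S₂) * Real.exp (2*β*t) - S₂) ≠ 0 := by
      intro h; apply hDne; linarith [h]
    show 2*S₂*(γ₃ t)*(γ₆ t) - 2*B*(γ₆ t) - β*(γ₃ t) = _
    simp only [γ₃, γ₆]
    have h2 : Real.exp (2*β*t) = Real.exp (β*t) * Real.exp (β*t) := by
      rw [← Real.exp_add]; ring_nf
    rw [h2] at hDne hDne2 ⊢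
    rw [show (2*β*s^2+S₂)*(Real.exp (β*t)*Real.exp (β*t)) - S₂ = -S₂ + 2*(Real.exp (β*t)*Real.exp (β*t))*β*s^2 + Real.exp (β*t)*Real.exp (β*t)*S₂ by ring]
    field_simp
    ring
  · show 2 * (-B + Real.exp (β*0) * x₀ * β + Real.exp (β*0) * B) /
        (-S₂ + 2 * Real.exp (2*β*0) * β * s^2 + Real.exp (2*β*0) * S₂) = x₀ / s^2
    simp only [mul_zero, Real.exp_zero]
    rw [div_eq_div_iff (by nlinarith [mul_pos hs hs]) (by positivity)]
    ring
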